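/- A tree (or forest) is nonsingular, i.e., its adjacency matrix has nonzero determinant, if and only if it has a perfect matching. -/

import Mathlib

open Function

variable {V : Type} [Fintype V] [DecidableEq V] {G : SimpleGraph V}

/-- Walk following a permutation whose values are adjacent to the arguments. -/
def walkPow (σ : Equiv.Perm V) (hσ : ∀ i, G.Adj (σ i) i) (j : V) :
    (n : ℕ) → G.Walk j (σ^[n] j)
  | 0 => SimpleGraph.Walk.nil
  | n + 1 => (walkPow σ hσ j n).concat
      (by rw [Function.iterate_succ_apply']; exact (hσ _).symm)

lemma walkPow_support (σ : Equiv.Perm V) (hσ : ∀ i, G.Adj (σ i) i) (j : V) (n : ℕ) :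
    (walkPow σ hσ j n).support = (List.range (n + 1)).map (fun k => σ^[k] j) := by
  induction n with
  | zero =>
      show [j] = _
      rw [List.range_succ, List.range_zero]
      simp
  | succ n ih =>
      rw [walkPow, SimpleGraph.Walk.support_concat, ih, List.range_succ (n := n + 1)]
      simp only [List.map_append, List.map_cons, List.map_nil, List.concat_eq_append,
        Equiv.Perm.iterate_eq_pow]

lemma walkPow_length (σ : Equiv.Perm V) (hσ : ∀ i, G.Adj (σ i) i) (j : V) (n : ℕ) :
    (walkPow σ hσ j n).length = n := by
  induction n with
  | zero => rfl
  | succ n ih => rw [walkPow, SimpleGraph.Walk.length_concat, ih]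

lemma forest_invol (hf : G.IsAcyclic) {σ : Equiv.Perm V}
    (hσ : ∀ i, G.Adj (σ i) i) (i : V) : σ (σ i) = i := by
  by_contra h2
  set m := Function.minimalPeriod (⇑σ) i with hm
  have hper : Function.IsPeriodicPt (⇑σ) (orderOf σ) i := by
    unfold Function.IsPeriodicPt Function.IsFixedPt
    rw [Equiv.Perm.iterate_eq_pow, pow_orderOf_eq_one]; rfl
  have hmpos : 0 < m := hper.minimalPeriod_pos (orderOf_pos σ)
  have hmi : σ^[m] i = i := Function.iterate_minimalPeriod
  have hm1 : m ≠ 1 := by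
    intro h; rw [h] at hmi; exact (hσ i).ne (by simpa using hmi)
  have hm2 : m ≠ 2 := by
    intro h; rw [h] at hmi; exact h2 (by simpa [Function.iterate_succ_apply'] using hmi)
  have hm3 : 3 ≤ m := by omega
  have hinj : ∀ a < m, ∀ b < m, σ^[a + 1] i = σ^[b + 1] i → a = b := by
    intro a ha b hb h
    rw [Function.iterate_succ_apply', Function.iterate_succ_apply'] at h
    have h' : σ^[a] i = σ^[b] i := σ.injective h
    exact Function.iterate_injOn_Iio_minimalPeriod (Set.mem_Iio.mpr ha) (Set.mem_Iio.mpr hb) h'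
  let p1 : G.Walk (σ i) i := SimpleGraph.Walk.cons (hσ i) SimpleGraph.Walk.nil
  have hp1 : p1.IsPath := by
    apply SimpleGraph.Walk.IsPath.mk'
    simp [p1, (hσ i).ne]
  have hend : σ^[m - 1] (σ i) = i := by
    rw [← Function.iterate_succ_apply]
    have h' : (m - 1).succ = m := by omega
    rw [h']; exact hmi
  let p2 : G.Walk (σ i) i := (walkPow σ hσ (σ i) (m - 1)).copy rfl hend
  have hsupp : p2.support = (List.range m).map (fun k => σ^[k + 1] i) := by
    show ((walkPow σ hσ (σ i) (m - 1)).copy rfl hend).support = _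
    rw [SimpleGraph.Walk.support_copy, walkPow_support]
    have h' : m - 1 + 1 = m := by omega
    rw [h']
    refine List.map_congr_left ?_
    intro k _
    rw [← Function.iterate_succ_apply]
  have hp2 : p2.IsPath := by
    apply SimpleGraph.Walk.IsPath.mk'
    rw [hsupp]
    refine List.Nodup.map_on ?_ List.nodup_range
    intro a ha b hb hab
    rw [List.mem_range] at ha hb
    exact hinj a ha b hb hab
  have huniq := hf.path_unique ⟨p1, hp1⟩ ⟨p2, hp2⟩
  have hw : p1 = p2 := congrArg Subtype.val huniq
  have hlen := congrArg SimpleGraph.Walk.length hw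
  have hl1 : p1.length = 1 := rfl
  have hl2 : p2.length = m - 1 := by
    show ((walkPow σ hσ (σ i) (m - 1)).copy rfl hend).length = m - 1
    rw [SimpleGraph.Walk.length_copy, walkPow_length]
  rw [hl1, hl2] at hlen
  omega

lemma sign_of_fpf_invol {σ : Equiv.Perm V} (hinv : σ * σ = 1) (hfix : ∀ i, σ i ≠ i) :
    Equiv.Perm.sign σ = (-1) ^ (Fintype.card V / 2) := by
  have h2 : ∀ n ∈ σ.cycleType, n = 2 := by
    intro n hn
    have hle := Equiv.Perm.two_le_of_mem_cycleType hn
    have hdvd := Equiv.Perm.dvd_of_mem_cycleType hn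
    have ho : orderOf σ ∣ 2 := orderOf_dvd_of_pow_eq_one (by rw [pow_two]; exact hinv)
    have hn2 : n ∣ 2 := hdvd.trans ho
    have := Nat.le_of_dvd two_pos hn2
    omega
  have hsupp : σ.support = Finset.univ := by
    apply Finset.eq_univ_iff_forall.mpr
    intro x; exact Equiv.Perm.mem_support.mpr (hfix x)
  have hsum : σ.cycleType.sum = Fintype.card V := by
    rw [Equiv.Perm.sum_cycleType, hsupp, Finset.card_univ]
  have hrep : σ.cycleType = Multiset.replicate (Multiset.card σ.cycleType) 2 :=
    Multiset.eq_replicate_card.mpr h2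
  have hsum2 : σ.cycleType.sum = 2 * Multiset.card σ.cycleType := by
    rw [hrep]; simp [Multiset.sum_replicate, mul_comm]
  set k := Multiset.card σ.cycleType with hk
  have hck : Fintype.card V / 2 = k := by omega
  rw [Equiv.Perm.sign_of_cycleType, hsum, ← hk, hck]
  have hcv : Fintype.card V = 2 * k := by omega
  rw [hcv, pow_add, pow_mul]
  norm_num

/-- A forest is nonsingular (its adjacency matrix has nonzero determinant) if and only if
it has a perfect matching. -/
theorem stmt_16 {V : Type} [Fintype V] [DecidableEq V] (G : SimpleGraph V)
    [DecidableRel G.Adj] (hforest : G.IsAcyclic) :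
    (G.adjMatrix ℝ).det ≠ 0 ↔ ∃ M : G.Subgraph, M.IsPerfectMatching := by
  classical
  set S : Finset (Equiv.Perm V) :=
    Finset.univ.filter (fun σ : Equiv.Perm V => ∀ i, G.Adj (σ i) i) with hS
  have hdet : (G.adjMatrix ℝ).det = (-1 : ℝ) ^ (Fintype.card V / 2) * S.card := by
    rw [Matrix.det_apply']
    have hterm : ∀ σ : Equiv.Perm V,
        ((Equiv.Perm.sign σ : ℤ) : ℝ) * ∏ i, G.adjMatrix ℝ (σ i) i
          = if (∀ i, G.Adj (σ i) i) then ((-1 : ℝ) ^ (Fintype.card V / 2)) else 0 := by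
      intro σ
      have hprod : ∏ i, G.adjMatrix ℝ (σ i) i
          = if (∀ i, G.Adj (σ i) i) then (1 : ℝ) else 0 := by
        simp only [SimpleGraph.adjMatrix_apply]
        rw [Fintype.prod_boole]
      rw [hprod]
      by_cases h : ∀ i, G.Adj (σ i) i
      · have hinv : σ * σ = 1 := by
          ext i
          simp [forest_invol hforest h i]
        have hsgn := sign_of_fpf_invol hinv (fun i => (h i).ne)
        simp [h, hsgn]
      · simp [h]
    calc (∑ σ : Equiv.Perm V, ((Equiv.Perm.sign σ : ℤ) : ℝ) * ∏ i, G.adjMatrix ℝ (σ i) i)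
        = ∑ σ : Equiv.Perm V,
            (if (∀ i, G.Adj (σ i) i) then ((-1 : ℝ) ^ (Fintype.card V / 2)) else 0) := by
          exact Finset.sum_congr rfl fun σ _ => hterm σ
      _ = ∑ σ ∈ S, ((-1 : ℝ) ^ (Fintype.card V / 2)) := by
          rw [hS, Finset.sum_filter]
      _ = (-1 : ℝ) ^ (Fintype.card V / 2) * S.card := by
          rw [Finset.sum_const, nsmul_eq_mul, mul_comm]
  rw [hdet]
  have hne : (-1 : ℝ) ^ (Fintype.card V / 2) ≠ 0 := by
    apply pow_ne_zero; norm_num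
  constructor
  · intro h
    have hcard : S.card ≠ 0 := by
      intro h0
      rw [h0] at h
      simp at h
    obtain ⟨σ, hσmem⟩ := Finset.card_pos.mp (Nat.pos_of_ne_zero hcard)
    have hσ : ∀ i, G.Adj (σ i) i := (Finset.mem_filter.mp hσmem).2
    refine ⟨⟨Set.univ, fun v w => σ v = w, ?_, ?_, ?_⟩, ?_, fun v => Set.mem_univ v⟩
    · intro v w h'
      subst h'
      exact (hσ v).symm
    · intro v w _
      exact Set.mem_univ v
    · refine ⟨fun v w h' => ?_⟩
      subst h'
      exact forest_invol hforest hσ v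
    · intro v _
      exact ⟨σ v, rfl, fun y hy => Eq.symm hy⟩
  · rintro ⟨M, hM⟩
    intro h0
    have hf : ∀ v, ∃! w, M.Adj v w := fun v => hM.1 (hM.2 v)
    set f : V → V := fun v => (hf v).choose with hfdef
    have hadj : ∀ v, M.Adj v (f v) := fun v => (hf v).choose_spec.1
    have hfinv : Function.Involutive f := by
      intro v
      exact ((hf (f v)).unique (hadj (f v)) (hadj v).symm)
    set σ : Equiv.Perm V := hfinv.toPerm with hσdef
    have hσ : ∀ i, G.Adj (σ i) i := by
      intro i
      exact M.adj_sub (hadj i).symm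
    have hmem : σ ∈ S := Finset.mem_filter.mpr ⟨Finset.mem_univ _, hσ⟩
    have : S.card ≠ 0 := by
      intro hc
      rw [Finset.card_eq_zero] at hc
      rw [hc] at hmem
      exact absurd hmem (Finset.notMem_empty σ)
    apply this
    have h1 : (S.card : ℝ) = 0 := by
      rcases mul_eq_zero.mp h0 with h | h
      · exact absurd h hne
      · exact h
    exact_mod_cast h1
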